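/- For all integers n, m ≥ 3, f(n+1, m+1) ≤ f(n+1, m) + f(n, m+1). Equivalently: every finite set of points in the plane, in general position with pairwise distinct x-coordinates, of cardinality strictly greater than f(n+1,m) + f(n,m+1), contains an (n+1)-cup or an (m+1)-cap. -/

import Mathlib

/-!
Common definitions: points in the plane, general position, distinct x-coordinates,
cups, caps, convex position, and the combinatorial functions from the paper.
-/

open Finset

/-- A point in the Euclidean plane, with `p.1` its x-coordinate and `p.2` its y-coordinate. -/
abbrev Pt : Type := ℝ × ℝ

/-- A set of points is in general position if no three (distinct) of its points are collinear. -/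
def GenPos (S : Set Pt) : Prop :=
  ∀ p ∈ S, ∀ q ∈ S, ∀ r ∈ S, p ≠ q → p ≠ r → q ≠ r → ¬ Collinear ℝ ({p, q, r} : Set Pt)

/-- A set of points has pairwise distinct x-coordinates. -/
def DistinctX (S : Set Pt) : Prop :=
  ∀ p ∈ S, ∀ q ∈ S, p ≠ q → p.1 ≠ q.1

/-- The slope of the segment from `p` to `q`. -/
noncomputable def PtSlope (p q : Pt) : ℝ := (q.2 - p.2) / (q.1 - p.1)

/-- `f 0, f 1, …, f (k-1)` is a `k`-cup in `P`: the points lie in `P`, are listed in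
increasing order of x-coordinate, and the slopes of consecutive segments strictly increase. -/
def IsCupSeq (k : ℕ) (P : Set Pt) (f : ℕ → Pt) : Prop :=
  (∀ i, i < k → f i ∈ P) ∧
  (∀ i j, i < j → j < k → (f i).1 < (f j).1) ∧
  (∀ i, i + 2 < k → PtSlope (f i) (f (i + 1)) < PtSlope (f (i + 1)) (f (i + 2)))

/-- `f 0, f 1, …, f (k-1)` is a `k`-cap in `P`: the points lie in `P`, are listed in
increasing order of x-coordinate, and the slopes of consecutive segments strictly decrease. -/
def IsCapSeq (k : ℕ) (P : Set Pt) (f : ℕ → Pt) : Prop :=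
  (∀ i, i < k → f i ∈ P) ∧
  (∀ i j, i < j → j < k → (f i).1 < (f j).1) ∧
  (∀ i, i + 2 < k → PtSlope (f i) (f (i + 1)) > PtSlope (f (i + 1)) (f (i + 2)))

/-- `P` contains a `k`-cup. -/
def HasCup (k : ℕ) (P : Set Pt) : Prop := ∃ f : ℕ → Pt, IsCupSeq k P f

/-- `P` contains a `k`-cap. -/
def HasCap (k : ℕ) (P : Set Pt) : Prop := ∃ f : ℕ → Pt, IsCapSeq k P f

/-- `S` is `(n, m)`-free: it contains no `n`-cup and no `m`-cap. -/
def IsFree (n m : ℕ) (S : Set Pt) : Prop := ¬ HasCup n S ∧ ¬ HasCap m S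

/-- A set of points is in convex position: every point of the set is a vertex (extreme point)
of its convex hull, i.e. no point lies in the convex hull of the others. -/
def ConvexPos (S : Set Pt) : Prop := ∀ p ∈ S, p ∉ convexHull ℝ (S \ {p})

/-- `S` contains `n` points in convex position. -/
def HasConvexNGon (n : ℕ) (S : Set Pt) : Prop :=
  ∃ T : Finset Pt, ↑T ⊆ S ∧ T.card = n ∧ ConvexPos ↑T

/-- The set of cardinalities of finite planar point sets, in general position with pairwise
distinct x-coordinates, containing no `n`-cup and no `m`-cap.  The Erdős–Szekeres cup–cap
number `f(n, m)` is the greatest element of this set. -/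
def CupCapCards (n m : ℕ) : Set ℕ :=
  {N : ℕ | ∃ S : Finset Pt, S.card = N ∧ GenPos ↑S ∧ DistinctX ↑S ∧
    ¬ HasCup n ↑S ∧ ¬ HasCap m ↑S}

/-- The defining property of the Erdős–Szekeres number `f(n) = N`: `N` is the smallest
positive integer such that every set of `N` points in general position in the plane
contains `n` points in convex position. -/
def IsESNumber (n N : ℕ) : Prop :=
  IsLeast {N : ℕ | 0 < N ∧
    ∀ S : Finset Pt, GenPos ↑S → S.card = N → HasConvexNGon n ↑S} N

/-- The point `r` lies strictly below the (non-vertical) line through `p` and `q`. -/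
noncomputable def StrictlyBelow (p q r : Pt) : Prop :=
  r.2 < p.2 + PtSlope p q * (r.1 - p.1)

/-- The point `s ∈ S` is `(m, l)`-good: for every `n ≥ 4` and every finite set `B` of at most
`n - 2` points such that `S ∪ B` is in general position with pairwise distinct x-coordinates
and contains an `(n-1)`-cup with leftmost point `s` and rightmost point in `B`, the set
`S ∪ B` contains an `l`-cap whose two rightmost points lie in `S`, or an `m`-cup whose two
leftmost points lie in `S`, or `n` points in convex position. -/
def IsGoodPoint (m l : ℕ) (S : Finset Pt) (s : Pt) : Prop :=
  ∀ n : ℕ, 4 ≤ n → ∀ B : Finset Pt, B.card ≤ n - 2 →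
    GenPos ↑(S ∪ B) → DistinctX ↑(S ∪ B) →
    (∃ f : ℕ → Pt, IsCupSeq (n - 1) ↑(S ∪ B) f ∧ f 0 = s ∧ f (n - 2) ∈ B) →
    ((∃ f : ℕ → Pt, IsCapSeq l ↑(S ∪ B) f ∧ f (l - 2) ∈ S ∧ f (l - 1) ∈ S) ∨
     (∃ f : ℕ → Pt, IsCupSeq m ↑(S ∪ B) f ∧ f 0 ∈ S ∧ f 1 ∈ S) ∨
     HasConvexNGon n ↑(S ∪ B))

/-- The weight functions `wᵢ(m, k)` from the paper. -/
def w (i m k : ℕ) : ℕ :=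
  if i = 4 then
    Nat.choose (m + k - 6) (k - 2) + Nat.choose (m + k - 7) (k - 3) +
      2 * Nat.choose (m + k - 8) (k - 4)
  else if k < i then 0
  else (i - 1) * Nat.choose (m + k - i - 4) (k - i)

/-- `g(m, l) = Σ_{i=4}^{∞} wᵢ(m, l) = Σ_{i=4}^{l} wᵢ(m, l)` (the sum is finite since
`wᵢ(m, l) = 0` for `i > l`). -/
def g (m l : ℕ) : ℕ := ∑ i ∈ Finset.Icc 4 l, w i m l

section AuxStmt1

lemma cupSeq_mono {k : ℕ} {P Q : Set Pt} {f : ℕ → Pt} (hPQ : P ⊆ Q)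
    (hf : IsCupSeq k P f) : IsCupSeq k Q f :=
  ⟨fun i hi => hPQ (hf.1 i hi), hf.2.1, hf.2.2⟩

lemma capSeq_mono {k : ℕ} {P Q : Set Pt} {f : ℕ → Pt} (hPQ : P ⊆ Q)
    (hf : IsCapSeq k P f) : IsCapSeq k Q f :=
  ⟨fun i hi => hPQ (hf.1 i hi), hf.2.1, hf.2.2⟩

lemma genPos_mono {P Q : Set Pt} (hPQ : P ⊆ Q) (h : GenPos Q) : GenPos P :=
  fun p hp q hq r hr h1 h2 h3 => h p (hPQ hp) q (hPQ hq) r (hPQ hr) h1 h2 h3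

lemma distinctX_mono {P Q : Set Pt} (hPQ : P ⊆ Q) (h : DistinctX Q) : DistinctX P :=
  fun p hp q hq h1 => h p (hPQ hp) q (hPQ hq) h1

lemma slope_ne_of_genpos {S : Set Pt} (hgp : GenPos S) {p q r : Pt}
    (hp : p ∈ S) (hq : q ∈ S) (hr : r ∈ S)
    (h1 : p.1 < q.1) (h2 : q.1 < r.1) : PtSlope p q ≠ PtSlope q r := by
  intro heq
  have hqp : q.1 - p.1 ≠ 0 := sub_ne_zero.mpr (ne_of_gt h1)
  have hrq : r.1 - q.1 ≠ 0 := sub_ne_zero.mpr (ne_of_gt h2)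
  have key : (q.2 - p.2) * (r.1 - q.1) = (r.2 - q.2) * (q.1 - p.1) :=
    (div_eq_div_iff hqp hrq).mp heq
  have hpq : p ≠ q := fun h => absurd (congrArg Prod.fst h) (ne_of_lt h1)
  have hqr : q ≠ r := fun h => absurd (congrArg Prod.fst h) (ne_of_lt h2)
  have hpr : p ≠ r := fun h => absurd (congrArg Prod.fst h) (ne_of_lt (h1.trans h2))
  apply hgp p hp q hq r hr hpq hpr hqr
  rw [collinear_iff_of_mem (Set.mem_insert p {q, r})]
  refine ⟨q - p, ?_⟩
  intro x hx
  rcases hx with rfl | rfl | rfl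
  · exact ⟨0, by simp⟩
  · exact ⟨1, by simp⟩
  · refine ⟨(x.1 - p.1) / (q.1 - p.1), ?_⟩
    have e1 : x.1 = (x.1 - p.1) / (q.1 - p.1) * (q.1 - p.1) + p.1 := by
      field_simp
      ring
    have e2 : x.2 = (x.1 - p.1) / (q.1 - p.1) * (q.2 - p.2) + p.2 := by
      field_simp
      linear_combination (-1:ℝ) * key
    exact Prod.ext e1 e2

lemma cup_prepend {k : ℕ} {P : Set Pt} {f : ℕ → Pt} {q : Pt} (hk : 2 ≤ k)
    (hf : IsCupSeq k P f) (hq : q ∈ P) (hx : q.1 < (f 0).1)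
    (hs : PtSlope q (f 0) < PtSlope (f 0) (f 1)) :
    IsCupSeq (k + 1) P (fun i => match i with | 0 => q | (i+1) => f i) := by
  obtain ⟨h1, h2, h3⟩ := hf
  refine ⟨?_, ?_, ?_⟩
  · intro i hi
    match i with
    | 0 => exact hq
    | (i+1) => exact h1 i (by omega)
  · intro i j hij hj
    match i, j with
    | 0, (j+1) =>
      show q.1 < (f j).1
      rcases Nat.eq_zero_or_pos j with rfl | hj0
      · exact hx
      · exact hx.trans (h2 0 j hj0 (by omega))
    | (i+1), (j+1) => exact h2 i j (by omega) (by omega)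
  · intro i hi
    match i with
    | 0 => exact hs
    | (i+1) => exact h3 i (by omega)

lemma cap_append {k : ℕ} {P : Set Pt} {f : ℕ → Pt} {p : Pt} (hk : 2 ≤ k)
    (hf : IsCapSeq k P f) (hp : p ∈ P) (hx : (f (k-1)).1 < p.1)
    (hs : PtSlope (f (k-2)) (f (k-1)) > PtSlope (f (k-1)) p) :
    IsCapSeq (k + 1) P (fun i => if i < k then f i else p) := by
  obtain ⟨h1, h2, h3⟩ := hf
  have hle : ∀ i, i < k → (f i).1 < p.1 := by
    intro i hi
    rcases eq_or_lt_of_le (Nat.le_sub_one_of_lt hi) with h | h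
    · rw [h]; exact hx
    · exact (h2 i (k-1) h (by omega)).trans hx
  refine ⟨?_, ?_, ?_⟩
  · intro i hi
    by_cases h : i < k
    · simpa [h] using h1 i h
    · simpa [h] using hp
  · intro i j hij hj
    by_cases hjk : j < k
    · have hik : i < k := lt_trans hij hjk
      simpa [hik, hjk] using h2 i j hij hjk
    · have hik : i < k := by omega
      simpa [hik, hjk] using hle i hik
  · intro i hi
    have hi0 : i < k := by omega
    have hi1 : i + 1 < k ∨ i + 1 = k := by omega
    rcases hi1 with hi1 | hi1
    · by_cases h : i + 2 < k
      · simpa [hi0, hi1, h] using h3 i h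
      · have e1 : i = k - 2 := by omega
        have e2 : i + 1 = k - 1 := by omega
        have : ¬ (i + 2 < k) := h
        simp only [hi0, hi1, this, if_pos, if_neg, if_true, if_false]
        rw [e2, e1]
        exact hs
    · omega

end AuxStmt1

/-- For all `n, m ≥ 3`, `f(n+1, m+1) ≤ f(n+1, m) + f(n, m+1)`; equivalently,
every finite planar point set in general position with pairwise distinct x-coordinates of
cardinality strictly greater than `f(n+1, m) + f(n, m+1)` contains an `(n+1)`-cup or an
`(m+1)`-cap. -/
theorem stmt_1 (n m : ℕ) (hn : 3 ≤ n) (hm : 3 ≤ m)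
    (a b c : ℕ)
    (ha : IsGreatest (CupCapCards (n + 1) (m + 1)) a)
    (hb : IsGreatest (CupCapCards (n + 1) m) b)
    (hc : IsGreatest (CupCapCards n (m + 1)) c) :
    a ≤ b + c ∧
      ∀ S : Finset Pt, GenPos ↑S → DistinctX ↑S → b + c < S.card →
        HasCup (n + 1) ↑S ∨ HasCap (m + 1) ↑S := by
  classical
  have main : ∀ S : Finset Pt, GenPos ↑S → DistinctX ↑S → b + c < S.card →
      HasCup (n + 1) ↑S ∨ HasCap (m + 1) ↑S := by
    intro S hgp hdx hcard
    by_contra hcon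
    push_neg at hcon
    obtain ⟨hnc, hmc⟩ := hcon
    set P : Pt → Prop := fun p => ∃ f : ℕ → Pt, IsCupSeq n (↑S) f ∧ f 0 = p with hP
    set T := S.filter P with hT
    set U := S.filter (fun p => ¬ P p) with hU
    have hTsub : (↑T : Set Pt) ⊆ ↑S := Finset.coe_subset.mpr (Finset.filter_subset _ _)
    have hUsub : (↑U : Set Pt) ⊆ ↑S := Finset.coe_subset.mpr (Finset.filter_subset _ _)
    -- T has no m-cap
    have hTcap : ¬ HasCap m ↑T := by
      rintro ⟨f, hf⟩
      have hfS : IsCapSeq m ↑S f := capSeq_mono hTsub hf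
      have hlast : f (m-1) ∈ T := hf.1 (m-1) (by omega)
      obtain ⟨-, hPl⟩ := Finset.mem_filter.mp hlast
      obtain ⟨g, hg, hg0⟩ := hPl
      have hAB : (f (m-2)).1 < (f (m-1)).1 := hfS.2.1 (m-2) (m-1) (by omega) (by omega)
      have hBC : (f (m-1)).1 < (g 1).1 := by
        have := hg.2.1 0 1 (by omega) (by omega)
        rwa [hg0] at this
      have hAS : f (m-2) ∈ (↑S : Set Pt) := hfS.1 (m-2) (by omega)
      have hBS : f (m-1) ∈ (↑S : Set Pt) := hfS.1 (m-1) (by omega)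
      have hCS : g 1 ∈ (↑S : Set Pt) := hg.1 1 (by omega)
      have hne := slope_ne_of_genpos hgp hAS hBS hCS hAB hBC
      rcases lt_trichotomy (PtSlope (f (m-2)) (f (m-1))) (PtSlope (f (m-1)) (g 1))
        with h | h | h
      · apply hnc
        refine ⟨_, cup_prepend (by omega) hg hAS ?_ ?_⟩
        · rw [hg0]; exact hAB
        · rw [hg0]; exact h
      · exact hne h
      · apply hmc
        exact ⟨_, cap_append (by omega) hfS hCS hBC h⟩
    -- U has no n-cup
    have hUcup : ¬ HasCup n ↑U := by
      rintro ⟨f, hf⟩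
      have hfS : IsCupSeq n ↑S f := cupSeq_mono hUsub hf
      have h0 : f 0 ∈ U := hf.1 0 (by omega)
      obtain ⟨-, hnP⟩ := Finset.mem_filter.mp h0
      exact hnP ⟨f, hfS, rfl⟩
    have hTb : T.card ≤ b := by
      apply hb.2
      refine ⟨T, rfl, genPos_mono hTsub hgp, distinctX_mono hTsub hdx, ?_, hTcap⟩
      intro ⟨f, hf⟩
      exact hnc ⟨f, cupSeq_mono hTsub hf⟩
    have hUc : U.card ≤ c := by
      apply hc.2
      refine ⟨U, rfl, genPos_mono hUsub hgp, distinctX_mono hUsub hdx, hUcup, ?_⟩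
      intro ⟨f, hf⟩
      exact hmc ⟨f, capSeq_mono hUsub hf⟩
    have hsum : T.card + U.card = S.card := Finset.card_filter_add_card_filter_not _
    omega
  refine ⟨?_, main⟩
  obtain ⟨S, hcard, hgp, hdx, hcup, hcap⟩ := ha.1
  by_contra hlt
  push_neg at hlt
  rcases main S hgp hdx (by omega) with h | h
  · exact hcup h
  · exact hcap h
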